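/- arXiv:1308.1060 — 3 statements merged into one kernel-verified Lean document; each statement's English description precedes it below -/
import Mathlib

section
/- For any n ≥ 2, real numbers a₁,…,aₙ with all a_i ≥ c > 0 (or with all a_i of the same sign and min|a_i| ≥ c), and for the function V(z) = Σᵢ |a_i||zⁱ|² on (ℝ²)ⁿ, the generator L of the rescaled vortex system satisfies LV(z) = 4ν Σᵢ |a_i| − V(z) at every z with pairwise distinct components, where LV(z) = ν Δ V(z) − (z/2)·∇V(z) + Σᵢ Σ_{j≠i} a_j K(zⁱ−zʲ)·∇_{zⁱ}V(z). -/
open Finset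

/-- The Biot and Savart kernel `K(x) = x^⊥ / (2π|x|²)` on `ℝ² \ {0}`. -/
noncomputable def biotSavart (x : EuclideanSpace ℝ (Fin 2)) : EuclideanSpace ℝ (Fin 2) :=
  (2 * Real.pi * ‖x‖ ^ 2)⁻¹ • (WithLp.equiv 2 (Fin 2 → ℝ)).symm ![-(x 1), x 0]

/-- Configuration space of `n` planar vortices. -/
abbrev Conf (n : ℕ) := Fin n → EuclideanSpace ℝ (Fin 2)

/-- Partial derivative of `f` at `z` in direction `d`. -/
noncomputable def pderiv {n : ℕ} (f : Conf n → ℝ) (d : Conf n) (z : Conf n) : ℝ :=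
  fderiv ℝ f z d

/-- Second partial derivative of `f` at `z` in direction `d` (twice). -/
noncomputable def pderiv2 {n : ℕ} (f : Conf n → ℝ) (d : Conf n) (z : Conf n) : ℝ :=
  fderiv ℝ (fun y => fderiv ℝ f y d) z d

/-- Unit direction moving the `k`-th coordinate of the `i`-th particle. -/
noncomputable def dir {n : ℕ} (i : Fin n) (k : Fin 2) : Conf n :=
  Function.update (0 : Conf n) i (EuclideanSpace.single k 1)

/-- Coordinate projection as a continuous linear map. -/
noncomputable def coordCLM {n : ℕ} (i : Fin n) (k : Fin 2) : Conf n →L[ℝ] ℝ :=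
  (EuclideanSpace.proj k).comp (ContinuousLinearMap.proj i)

lemma coordCLM_apply {n : ℕ} (i : Fin n) (k : Fin 2) (y : Conf n) :
    coordCLM i k y = y i k := rfl

lemma dir_apply {n : ℕ} (i i' : Fin n) (k k' : Fin 2) :
    dir i k i' k' = if i' = i then (if k' = k then 1 else 0) else 0 := by
  unfold dir
  rcases eq_or_ne i' i with h | h
  · subst h
    simp [EuclideanSpace.single_apply]
  · simp [Function.update_of_ne h, h]

lemma hasFDerivV {n : ℕ} (a : Fin n → ℝ) (y : Conf n) :
    HasFDerivAt (fun y : Conf n => ∑ i : Fin n, |a i| * ‖y i‖ ^ 2)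
      (∑ i : Fin n, ∑ k : Fin 2, (2 * |a i| * y i k) • coordCLM i k) y := by
  have hfun : (fun y : Conf n => ∑ i : Fin n, |a i| * ‖y i‖ ^ 2)
      = fun y : Conf n => ∑ i : Fin n, ∑ k : Fin 2,
          |a i| * (coordCLM i k y * coordCLM i k y) := by
    funext w
    refine Finset.sum_congr rfl fun i _ => ?_
    rw [← Finset.mul_sum]
    congr 1
    rw [EuclideanSpace.norm_eq, Real.sq_sqrt (by positivity)]
    refine Finset.sum_congr rfl fun k _ => ?_
    rw [coordCLM_apply, Real.norm_eq_abs, sq_abs]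
    ring
  rw [hfun]
  refine HasFDerivAt.fun_sum fun i _ => HasFDerivAt.fun_sum fun k _ => ?_
  have h := (((coordCLM i k).hasFDerivAt (x := y)).mul
    ((coordCLM i k).hasFDerivAt (x := y))).const_mul |a i|
  refine (h.congr_of_eventuallyEq (Filter.Eventually.of_forall fun w => ?_)).congr_fderiv ?_
  · simp [Pi.mul_apply, pow_two]
  ext d
  simp [coordCLM_apply]
  ring

lemma pderiv_V {n : ℕ} (a : Fin n → ℝ) (y : Conf n) (i : Fin n) (k : Fin 2) :
    pderiv (fun w : Conf n => ∑ i : Fin n, |a i| * ‖w i‖ ^ 2) (dir i k) y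
      = 2 * |a i| * y i k := by
  unfold pderiv
  rw [(hasFDerivV a y).fderiv]
  simp only [ContinuousLinearMap.coe_sum', Finset.sum_apply,
    ContinuousLinearMap.coe_smul', Pi.smul_apply, coordCLM_apply, dir_apply,
    smul_eq_mul, mul_ite, mul_one, mul_zero]
  rw [Finset.sum_eq_single i]
  · rw [Finset.sum_eq_single k]
    · simp
    · intro b _ hb; simp [hb]
    · simp
  · intro b _ hb; simp [hb]
  · simp

lemma pderiv2_V {n : ℕ} (a : Fin n → ℝ) (y : Conf n) (i : Fin n) (k : Fin 2) :
    pderiv2 (fun w : Conf n => ∑ i : Fin n, |a i| * ‖w i‖ ^ 2) (dir i k) y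
      = 2 * |a i| := by
  unfold pderiv2
  have h1 : (fun w : Conf n =>
      fderiv ℝ (fun w : Conf n => ∑ i : Fin n, |a i| * ‖w i‖ ^ 2) w (dir i k))
      = fun w : Conf n => ((2 * |a i|) • coordCLM i k) w := by
    funext w
    have := pderiv_V a w i k
    unfold pderiv at this
    rw [this]
    simp [coordCLM_apply]
  rw [h1, (((2 * |a i|) • coordCLM i k).hasFDerivAt (x := y)).fderiv]
  simp [coordCLM_apply, dir_apply]

lemma biot_inner (u v : EuclideanSpace ℝ (Fin 2)) :
    (∑ k : Fin 2, biotSavart (u - v) k * u k)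
      + (∑ k : Fin 2, biotSavart (v - u) k * v k) = 0 := by
  have hnorm : ‖v - u‖ = ‖u - v‖ := norm_sub_rev v u
  simp only [biotSavart, Fin.sum_univ_two, PiLp.smul_apply, PiLp.sub_apply,
    WithLp.equiv_symm_apply, PiLp.toLp_apply, Matrix.cons_val_zero, Matrix.cons_val_one,
    Matrix.head_cons, smul_eq_mul, hnorm]
  ring

lemma pair_cancel {n : ℕ} (f : Fin n → Fin n → ℝ) (hf : ∀ i j, f i j + f j i = 0) :
    ∑ i : Fin n, ∑ j ∈ univ.filter (· ≠ i), f i j = 0 := by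
  have h1 : ∑ i : Fin n, ∑ j ∈ univ.filter (· ≠ i), f i j
      = ∑ i : Fin n, ∑ j ∈ univ.filter (· ≠ i), f j i := by
    exact Finset.sum_comm' (fun x y => by simp [ne_comm, eq_comm])
  have h2 : (∑ i : Fin n, ∑ j ∈ univ.filter (· ≠ i), f i j)
      + (∑ i : Fin n, ∑ j ∈ univ.filter (· ≠ i), f j i) = 0 := by
    rw [← Finset.sum_add_distrib]
    refine Finset.sum_eq_zero fun i _ => ?_
    rw [← Finset.sum_add_distrib]
    exact Finset.sum_eq_zero fun j _ => hf i j
  linarith [h1, h2]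

/-- For vorticities of constant sign bounded away from zero, the generator of the
rescaled vortex system applied to `V(z) = ∑ᵢ |aᵢ| |zⁱ|²` satisfies
`L V(z) = 4ν ∑ᵢ |aᵢ| - V(z)` at every configuration with pairwise distinct components. -/
theorem generator_lyapunov (n : ℕ) (hn : 2 ≤ n) (ν : ℝ) (hν : 0 < ν) (a : Fin n → ℝ)
    (c : ℝ) (hc : 0 < c) (hac : ∀ i, c ≤ |a i|)
    (hsign : (∀ i, 0 < a i) ∨ (∀ i, a i < 0))
    (z : Conf n) (hz : ∀ i j, i ≠ j → z i ≠ z j)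
    (V : Conf n → ℝ) (hV : V = fun y => ∑ i : Fin n, |a i| * ‖y i‖ ^ 2) :
    ν * (∑ i : Fin n, ∑ k : Fin 2, pderiv2 V (dir i k) z)
      - (1 / 2) * (∑ i : Fin n, ∑ k : Fin 2, z i k * pderiv V (dir i k) z)
      + (∑ i : Fin n, ∑ j ∈ univ.filter (· ≠ i),
          a j * ∑ k : Fin 2, biotSavart (z i - z j) k * pderiv V (dir i k) z)
    = 4 * ν * (∑ i : Fin n, |a i|) - V z := by
  subst hV
  simp only [pderiv_V, pderiv2_V]
  have habs : ∀ i j : Fin n, a j * |a i| = a i * |a j| := by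
    intro i j
    rcases hsign with h | h
    · rw [abs_of_pos (h i), abs_of_pos (h j)]; ring
    · rw [abs_of_neg (h i), abs_of_neg (h j)]; ring
  have hnormsq : ∀ i, ‖z i‖ ^ 2 = z i 0 * z i 0 + z i 1 * z i 1 := by
    intro i
    rw [EuclideanSpace.norm_eq, Real.sq_sqrt (by positivity)]
    simp [Fin.sum_univ_two, Real.norm_eq_abs, sq_abs]
    ring
  have h3 : (∑ i : Fin n, ∑ j ∈ univ.filter (· ≠ i),
      a j * ∑ k : Fin 2, biotSavart (z i - z j) k * (2 * |a i| * z i k)) = 0 := by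
    refine pair_cancel _ fun i j => ?_
    have hb := biot_inner (z i) (z j)
    have hsum1 : (∑ k : Fin 2, biotSavart (z i - z j) k * (2 * |a i| * z i k))
        = 2 * |a i| * ∑ k : Fin 2, biotSavart (z i - z j) k * z i k := by
      rw [Finset.mul_sum]; exact Finset.sum_congr rfl fun k _ => by ring
    have hsum2 : (∑ k : Fin 2, biotSavart (z j - z i) k * (2 * |a j| * z j k))
        = 2 * |a j| * ∑ k : Fin 2, biotSavart (z j - z i) k * z j k := by
      rw [Finset.mul_sum]; exact Finset.sum_congr rfl fun k _ => by ring
    rw [hsum1, hsum2]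
    linear_combination (2 * (∑ k : Fin 2, biotSavart (z i - z j) k * z i k)) * habs i j
      + 2 * a i * |a j| * hb
  rw [h3]
  have hA : (∑ i : Fin n, ∑ k : Fin 2, 2 * |a i|) = 4 * ∑ i : Fin n, |a i| := by
    simp only [Fin.sum_univ_two]
    rw [Finset.mul_sum]
    exact Finset.sum_congr rfl fun i _ => by ring
  have hB : (∑ i : Fin n, ∑ k : Fin 2, z i k * (2 * |a i| * z i k))
      = 2 * ∑ i : Fin n, |a i| * ‖z i‖ ^ 2 := by
    simp only [Fin.sum_univ_two]
    rw [Finset.mul_sum]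
    refine Finset.sum_congr rfl fun i _ => ?_
    rw [hnormsq i]
    ring
  rw [hA, hB]
  ring
end

section
/- Let n ≥ 2, a ∈ ℝ, ν > 0 and let p_∞(z¹,…,zⁿ) = (4πν)^{−n} exp(−(1/(4ν)) Σᵢ |zⁱ|²) be the Gaussian density on ℝ^{2n}. Then for all z with pairwise distinct components, Σᵢ (Σ_{j≠i} K(zⁱ−zʲ)) · ∇_{zⁱ} p_∞(z) = 0. -/
open Finset

lemma bs_pair (x y : EuclideanSpace ℝ (Fin 2)) :
    (∑ k : Fin 2, biotSavart (x - y) k * x k) + (∑ k : Fin 2, biotSavart (y - x) k * y k) = 0 := by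
  simp only [biotSavart, Fin.sum_univ_two, WithLp.equiv_symm_apply, PiLp.toLp_apply, PiLp.smul_apply,
    PiLp.sub_apply, smul_eq_mul, Matrix.cons_val_zero, Matrix.cons_val_one, Matrix.head_cons,
    norm_sub_rev y x]
  ring

lemma pderiv_gaussian {n : ℕ} (ν : ℝ) (hν : 0 < ν) (pinf : Conf n → ℝ)
    (hpinf : pinf = fun y => ((4 * Real.pi * ν) ^ n)⁻¹ *
      Real.exp (-(1 / (4 * ν)) * ∑ i : Fin n, ‖y i‖ ^ 2))
    (z : Conf n) (i : Fin n) (k : Fin 2) :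
    pderiv pinf (dir i k) z = pinf z * (-(1 / (2 * ν)) * z i k) := by
  set b : ℝ := -(1 / (4 * ν)) with hb
  set L : Conf n →L[ℝ] ℝ :=
    ∑ i' : Fin n, (2 : ℕ) • ((innerSL ℝ (z i')).comp (ContinuousLinearMap.proj i')) with hL
  have hS : HasFDerivAt (fun y : Conf n => ∑ i' : Fin n, ‖y i'‖ ^ 2) L z := by
    exact HasFDerivAt.fun_sum fun i' _ => (ContinuousLinearMap.proj i' : (Conf n) →L[ℝ] _).hasFDerivAt.norm_sq
  have hexp : HasFDerivAt (fun y : Conf n => ((4 * Real.pi * ν) ^ n)⁻¹ *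
      Real.exp (b * ∑ i' : Fin n, ‖y i'‖ ^ 2))
      (((4 * Real.pi * ν) ^ n)⁻¹ •
        (Real.exp (b * ∑ i' : Fin n, ‖z i'‖ ^ 2) • (b • L))) z :=
    ((hS.const_mul b).exp).const_mul _
  have hL_apply : L (dir i k) = 2 * z i k := by
    rw [hL]
    simp only [ContinuousLinearMap.sum_apply, ContinuousLinearMap.smul_apply, nsmul_eq_mul,
      ContinuousLinearMap.comp_apply, ContinuousLinearMap.proj_apply, smul_eq_mul]
    rw [Finset.sum_eq_single i]
    · simp [dir, Function.update_self, EuclideanSpace.inner_single_right]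
    · intro i' _ hne
      simp [dir, Function.update_of_ne hne]
    · simp
  have := hexp.fderiv
  rw [pderiv, hpinf] at *
  rw [hb] at this
  rw [this]
  simp only [ContinuousLinearMap.smul_apply, smul_eq_mul, hL_apply]
  have hν' : ν ≠ 0 := ne_of_gt hν
  rw [hb]
  field_simp
  ring

/-- For the Gaussian density `p_∞(z) = (4πν)^{-n} exp(-|z|²/(4ν))` on `ℝ^{2n}`,
`∑ᵢ (∑_{j ≠ i} K(zⁱ - zʲ)) · ∇_{zⁱ} p_∞(z) = 0` at every configuration with pairwise
distinct components. -/
theorem biotSavart_grad_gaussian_sum_eq_zero (n : ℕ) (hn : 2 ≤ n) (a ν : ℝ) (hν : 0 < ν)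
    (pinf : Conf n → ℝ)
    (hpinf : pinf = fun y => ((4 * Real.pi * ν) ^ n)⁻¹ *
      Real.exp (-(1 / (4 * ν)) * ∑ i : Fin n, ‖y i‖ ^ 2))
    (z : Conf n) (hz : ∀ i j, i ≠ j → z i ≠ z j) :
    ∑ i : Fin n, ∑ k : Fin 2,
      (∑ j ∈ univ.filter (· ≠ i), biotSavart (z i - z j) k) * pderiv pinf (dir i k) z
    = 0 := by
  have key : ∀ i k, pderiv pinf (dir i k) z = pinf z * (-(1 / (2 * ν)) * z i k) :=
    fun i k => pderiv_gaussian ν hν pinf hpinf z i k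
  simp only [key]
  set C : ℝ := pinf z * (-(1 / (2 * ν))) with hC
  have hrw : ∀ i : Fin n, ∑ k : Fin 2,
      (∑ j ∈ univ.filter (· ≠ i), biotSavart (z i - z j) k) * (pinf z * (-(1 / (2 * ν)) * z i k))
      = C * ∑ j ∈ univ.filter (· ≠ i), ∑ k : Fin 2, biotSavart (z i - z j) k * z i k := by
    intro i
    simp only [Finset.sum_mul, Finset.mul_sum]
    rw [Finset.sum_comm]
    exact Finset.sum_congr rfl fun j _ => Finset.sum_congr rfl fun k _ => by ring
  simp only [hrw, ← Finset.mul_sum]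
  have hT : ∑ i : Fin n, ∑ j ∈ univ.filter (· ≠ i),
      (∑ k : Fin 2, biotSavart (z i - z j) k * z i k) = 0 := by
    set f : Fin n → Fin n → ℝ := fun i j => ∑ k : Fin 2, biotSavart (z i - z j) k * z i k with hf
    have hswap : ∑ i : Fin n, ∑ j ∈ univ.filter (· ≠ i), f i j
        = ∑ i : Fin n, ∑ j ∈ univ.filter (· ≠ i), f j i := by
      rw [Finset.sum_comm' (t' := univ) (s' := fun j => univ.filter (· ≠ j))]
      intro i j
      simp [ne_comm, eq_comm]
    have h2 : (∑ i : Fin n, ∑ j ∈ univ.filter (· ≠ i), f i j)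
        + (∑ i : Fin n, ∑ j ∈ univ.filter (· ≠ i), f i j) = 0 := by
      nth_rewrite 2 [hswap]
      rw [← Finset.sum_add_distrib]
      refine Finset.sum_eq_zero fun i _ => ?_
      rw [← Finset.sum_add_distrib]
      refine Finset.sum_eq_zero fun j _ => ?_
      exact bs_pair (z i) (z j)
    linarith
  rw [hT, mul_zero]
end

section
/- Let p₀ and p_∞ be probability densities on ℝ^d with p_∞ > 0 and H(p₀|p_∞) = ∫ p₀ ln(p₀/p_∞) < ∞. For k ∈ ℕ*, set α_k = ∫ (p₀ ∧ k p_∞), p̃₀ᵏ = (p₀ ∧ k p_∞)/α_k and p₀ᵏ = α_k p̃₀ᵏ + (1−α_k) p_∞. Then α_k → 1 and H(p₀ᵏ|p_∞) → H(p₀|p_∞) as k → ∞. -/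
open MeasureTheory Filter

lemma aux_xlogx (x y : ℝ) (hx : 0 ≤ x) (hxy : x ≤ y) (hy : 1 ≤ y) :
    |x * Real.log x| ≤ 1 + y * Real.log y := by
  have hylog : 0 ≤ y * Real.log y := mul_nonneg (by linarith) (Real.log_nonneg hy)
  rcases le_or_gt x 1 with h1 | h1
  · rcases eq_or_lt_of_le hx with h0 | h0
    · simp [← h0]; linarith
    · have hup : x * Real.log x ≤ 0 :=
        mul_nonpos_iff.mpr (Or.inl ⟨hx, Real.log_nonpos hx h1⟩)
      have hlog : Real.log x⁻¹ ≤ x⁻¹ - 1 := Real.log_le_sub_one_of_pos (by positivity)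
      rw [Real.log_inv] at hlog
      have hlow : x - 1 ≤ x * Real.log x := by
        have : x * (1 - x⁻¹) ≤ x * Real.log x :=
          mul_le_mul_of_nonneg_left (by linarith) hx
        have hxinv : x * x⁻¹ = 1 := mul_inv_cancel₀ (ne_of_gt h0)
        nlinarith
      rw [abs_le]
      constructor <;> nlinarith
  · have h0 : 0 ≤ Real.log x := Real.log_nonneg h1.le
    rw [abs_of_nonneg (mul_nonneg (by linarith) h0)]
    have : x * Real.log x ≤ y * Real.log y :=
      mul_le_mul hxy (Real.log_le_log (by linarith) hxy) h0 (by linarith)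
    linarith

lemma aux_core (a c x : ℝ) (ha : 0 ≤ a) (hc : 0 < c) (hx0 : 0 ≤ x)
    (hxy : x ≤ a / c + 1) :
    |(c * x) * Real.log x| ≤
      c + Real.log 2 * (a + c) + |a * Real.log (a / c)| + a := by
  have hcne : c ≠ 0 := ne_of_gt hc
  have hy1 : (1:ℝ) ≤ a / c + 1 := by
    have : 0 ≤ a / c := by positivity
    linarith
  have key : |(c * x) * Real.log x| ≤ c * (1 + (a / c + 1) * Real.log (a / c + 1)) := by
    calc |c * x * Real.log x| = c * |x * Real.log x| := by
          rw [mul_assoc, abs_mul, abs_of_pos hc]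
      _ ≤ c * (1 + (a / c + 1) * Real.log (a / c + 1)) :=
          mul_le_mul_of_nonneg_left (aux_xlogx x _ hx0 hxy hy1) hc.le
  have hcy : c * (a / c + 1) = a + c := by field_simp
  have hkey2 : c * (1 + (a / c + 1) * Real.log (a / c + 1))
      = c + (a + c) * Real.log (a / c + 1) := by
    rw [mul_add, mul_one, ← mul_assoc, hcy]
  have hM0 : (0:ℝ) ≤ max (Real.log (a / c)) 0 := le_max_right _ _
  have hlogy : Real.log (a / c + 1) ≤ Real.log 2 + max (Real.log (a / c)) 0 := by
    rcases le_or_gt (a / c) 1 with h | h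
    · have : Real.log (a / c + 1) ≤ Real.log 2 :=
        Real.log_le_log (by linarith) (by linarith)
      linarith
    · have hy2 : a / c + 1 ≤ 2 * (a / c) := by linarith
      have h2 : Real.log (a / c + 1) ≤ Real.log 2 + Real.log (a / c) := by
        rw [← Real.log_mul (by norm_num) (by linarith)]
        exact Real.log_le_log (by linarith) hy2
      have : Real.log (a / c) ≤ max (Real.log (a / c)) 0 := le_max_left _ _
      linarith
  have haM : a * max (Real.log (a / c)) 0 ≤ |a * Real.log (a / c)| := by
    rcases le_or_gt (Real.log (a / c)) 0 with h | h
    · rw [max_eq_right h, mul_zero]; exact abs_nonneg _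
    · rw [max_eq_left h.le]; exact le_abs_self _
  have hcM : c * max (Real.log (a / c)) 0 ≤ a := by
    rcases le_or_gt (Real.log (a / c)) 0 with h | h
    · rw [max_eq_right h, mul_zero]; exact ha
    · have hacpos : 0 < a / c := by
        rcases eq_or_lt_of_le (show (0:ℝ) ≤ a / c by positivity) with h0 | h0
        · rw [← h0] at h; simp at h
        · exact h0
      have hle : Real.log (a / c) ≤ a / c - 1 :=
        Real.log_le_sub_one_of_pos hacpos
      have h3 : c * Real.log (a / c) ≤ c * (a / c - 1) :=
        mul_le_mul_of_nonneg_left hle hc.le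
      have hca : c * (a / c) = a := by field_simp
      rw [max_eq_left h.le]; nlinarith
  have h2pos : 0 ≤ Real.log 2 := Real.log_nonneg (by norm_num)
  have h1 : (a + c) * Real.log (a / c + 1)
      ≤ (a + c) * (Real.log 2 + max (Real.log (a / c)) 0) :=
    mul_le_mul_of_nonneg_left hlogy (by linarith)
  nlinarith


lemma aux_bound (a c t ε : ℝ) (ha : 0 ≤ a) (hc : 0 < c) (ht : 0 ≤ t) (hta : t ≤ a)
    (hε0 : 0 ≤ ε) (hε1 : ε ≤ 1) :
    |(t + ε * c) * Real.log ((t + ε * c) / c)| ≤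
      c + Real.log 2 * (a + c) + |a * Real.log (a / c)| + a := by
  have hcne : c ≠ 0 := ne_of_gt hc
  have hval : t + ε * c = c * ((t + ε * c) / c) := by field_simp
  have hx0 : 0 ≤ (t + ε * c) / c := div_nonneg (by nlinarith) hc.le
  have hxy : (t + ε * c) / c ≤ a / c + 1 := by
    have h2 : (t + ε * c) / c ≤ (a + c) / c := by gcongr; nlinarith
    have h3 : (a + c) / c = a / c + 1 := by field_simp
    linarith
  calc |(t + ε * c) * Real.log ((t + ε * c) / c)|
      = |(c * ((t + ε * c) / c)) * Real.log ((t + ε * c) / c)| := by rw [← hval]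
    _ ≤ c + Real.log 2 * (a + c) + |a * Real.log (a / c)| + a :=
        aux_core a c _ ha hc hx0 hxy

/-- Approximation of the initial density: with `α_k = ∫ p₀ ∧ k p_∞`,
`p̃₀ᵏ = (p₀ ∧ k p_∞)/α_k` and `p₀ᵏ = α_k p̃₀ᵏ + (1-α_k) p_∞`, one has `α_k → 1` and
`H(p₀ᵏ|p_∞) → H(p₀|p_∞)` as `k → ∞`. -/
theorem entropy_approximation (d : ℕ) (p₀ pinf : EuclideanSpace ℝ (Fin d) → ℝ)
    (hp₀meas : Measurable p₀) (hp₀nonneg : ∀ z, 0 ≤ p₀ z) (hp₀prob : ∫ z, p₀ z = 1)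
    (hpinfmeas : Measurable pinf) (hpinfpos : ∀ z, 0 < pinf z) (hpinfprob : ∫ z, pinf z = 1)
    (hent : Integrable (fun z => p₀ z * Real.log (p₀ z / pinf z)))
    (αk : ℕ → ℝ) (hαk : ∀ k : ℕ, αk k = ∫ z, min (p₀ z) (k * pinf z))
    (ptilde : ℕ → EuclideanSpace ℝ (Fin d) → ℝ)
    (hptilde : ∀ (k : ℕ) z, ptilde k z = min (p₀ z) (k * pinf z) / αk k)
    (pk : ℕ → EuclideanSpace ℝ (Fin d) → ℝ)
    (hpk : ∀ (k : ℕ) z, pk k z = αk k * ptilde k z + (1 - αk k) * pinf z) :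
    Tendsto αk atTop (nhds 1) ∧
      Tendsto (fun k : ℕ => ∫ z, pk k z * Real.log (pk k z / pinf z)) atTop
        (nhds (∫ z, p₀ z * Real.log (p₀ z / pinf z))) := by
  have hp₀int : Integrable p₀ := by
    by_contra h
    rw [integral_undef h] at hp₀prob
    norm_num at hp₀prob
  have hpinfint : Integrable pinf := by
    by_contra h
    rw [integral_undef h] at hpinfprob
    norm_num at hpinfprob
  have hminmeas : ∀ k : ℕ, Measurable fun z => min (p₀ z) (k * pinf z) :=
    fun k => hp₀meas.min (measurable_const.mul hpinfmeas)
  have hminnonneg : ∀ (k : ℕ) z, 0 ≤ min (p₀ z) ((k : ℝ) * pinf z) :=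
    fun k z => le_min (hp₀nonneg z) (mul_nonneg (Nat.cast_nonneg k) (hpinfpos z).le)
  have hminint : ∀ k : ℕ, Integrable fun z => min (p₀ z) (k * pinf z) := fun k =>
    hp₀int.mono (hminmeas k).aestronglyMeasurable
      (Filter.Eventually.of_forall fun z => by
        rw [Real.norm_eq_abs, Real.norm_eq_abs, abs_of_nonneg (hminnonneg k z),
          abs_of_nonneg (hp₀nonneg z)]
        exact min_le_left _ _)
  have hmintendsto : ∀ z, Tendsto (fun k : ℕ => min (p₀ z) (k * pinf z)) atTop
      (nhds (p₀ z)) := by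
    intro z
    have hev : ∀ᶠ k : ℕ in atTop, min (p₀ z) ((k : ℝ) * pinf z) = p₀ z := by
      filter_upwards [Filter.eventually_ge_atTop ⌈p₀ z / pinf z⌉₊] with k hk
      apply min_eq_left
      rw [← div_le_iff₀ (hpinfpos z)]
      calc p₀ z / pinf z ≤ (⌈p₀ z / pinf z⌉₊ : ℝ) := Nat.le_ceil _
        _ ≤ (k : ℝ) := by exact_mod_cast hk
    exact tendsto_const_nhds.congr' (Filter.EventuallyEq.symm hev)
  have hα1 : Tendsto αk atTop (nhds 1) := by
    have h := tendsto_integral_of_dominated_convergence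
      (μ := (volume : Measure (EuclideanSpace ℝ (Fin d))))
      (F := fun (k : ℕ) z => min (p₀ z) (k * pinf z)) (f := p₀) p₀
      (fun k => (hminmeas k).aestronglyMeasurable) hp₀int
      (fun k => Filter.Eventually.of_forall fun z => by
        rw [Real.norm_eq_abs, abs_of_nonneg (hminnonneg k z)]; exact min_le_left _ _)
      (Filter.Eventually.of_forall hmintendsto)
    rw [hp₀prob] at h
    exact h.congr fun k => (hαk k).symm
  refine ⟨hα1, ?_⟩
  have hαnonneg : ∀ k, 0 ≤ αk k := fun k => by
    rw [hαk k]; exact integral_nonneg fun z => hminnonneg k z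
  have hαle1 : ∀ k, αk k ≤ 1 := fun k => by
    rw [hαk k, ← hp₀prob]
    exact integral_mono (hminint k) hp₀int fun z => min_le_left _ _
  have hαpos : ∀ᶠ k in atTop, 0 < αk k :=
    hα1.eventually (eventually_gt_nhds (by norm_num))
  have hε : Tendsto (fun k => 1 - αk k) atTop (nhds 0) := by
    have := tendsto_const_nhds (x := (1 : ℝ)) (f := atTop (α := ℕ)) |>.sub hα1
    simpa using this
  have hpkval : ∀ k : ℕ, αk k ≠ 0 → ∀ z,
      pk k z = min (p₀ z) (k * pinf z) + (1 - αk k) * pinf z := by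
    intro k hk z
    rw [hpk k z, hptilde k z, mul_comm, div_mul_cancel₀ _ hk]
  have hpkmeas : ∀ k : ℕ, Measurable (pk k) := by
    intro k
    have hfe : pk k = fun z =>
        αk k * (min (p₀ z) (k * pinf z) / αk k) + (1 - αk k) * pinf z := by
      funext z; rw [hpk k z, hptilde k z]
    rw [hfe]
    exact (measurable_const.mul ((hminmeas k).div measurable_const)).add
      (measurable_const.mul hpinfmeas)
  have hGint : Integrable (fun z => pinf z + Real.log 2 * (p₀ z + pinf z)
      + |p₀ z * Real.log (p₀ z / pinf z)| + p₀ z) :=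
    ((hpinfint.add ((hp₀int.add hpinfint).const_mul _)).add hent.abs).add hp₀int
  refine tendsto_integral_filter_of_dominated_convergence
    (fun z => pinf z + Real.log 2 * (p₀ z + pinf z)
      + |p₀ z * Real.log (p₀ z / pinf z)| + p₀ z)
    (Filter.Eventually.of_forall fun k =>
      ((hpkmeas k).mul
        (Real.measurable_log.comp ((hpkmeas k).div hpinfmeas))).aestronglyMeasurable)
    ?_ hGint ?_
  · filter_upwards [hαpos] with k hk
    refine Filter.Eventually.of_forall fun z => ?_
    rw [Real.norm_eq_abs, hpkval k (ne_of_gt hk) z]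
    exact aux_bound (p₀ z) (pinf z) (min (p₀ z) (k * pinf z)) (1 - αk k)
      (hp₀nonneg z) (hpinfpos z) (hminnonneg k z) (min_le_left _ _)
      (by linarith [hαle1 k]) (by linarith [hαnonneg k])
  · refine Filter.Eventually.of_forall fun z => ?_
    have hc := hpinfpos z
    have hcne : pinf z ≠ 0 := ne_of_gt hc
    have hpkt : Tendsto (fun k => pk k z) atTop (nhds (p₀ z)) := by
      have h1 : Tendsto (fun k : ℕ => min (p₀ z) (k * pinf z) + (1 - αk k) * pinf z)
          atTop (nhds (p₀ z)) := by
        have := (hmintendsto z).add (hε.mul_const (pinf z))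
        simpa using this
      refine h1.congr' ?_
      filter_upwards [hαpos] with k hk
      exact (hpkval k (ne_of_gt hk) z).symm
    have hdiv : Tendsto (fun k => pk k z / pinf z) atTop (nhds (p₀ z / pinf z)) :=
      hpkt.div_const _
    have hcont := (Real.continuous_mul_log.tendsto (p₀ z / pinf z)).comp hdiv
    have h2 := hcont.const_mul (pinf z)
    have heq : ∀ b : ℝ, pinf z * (b / pinf z * Real.log (b / pinf z))
        = b * Real.log (b / pinf z) := by
      intro b
      rw [← mul_assoc, mul_comm (pinf z) (b / pinf z), div_mul_cancel₀ _ hcne]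
    simpa only [Function.comp_def, heq] using h2
end
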